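/- Let p be a prime, f(T) ∈ ℤ_p[[T]] a power series whose constant coefficient lies in pℤ_p, and α ∈ ℤ_p. Let f̄ ∈ 𝔽_p[[T]] denote the coefficientwise reduction of f modulo p (so f̄ has zero constant coefficient). Then the ring homomorphism ℤ_p[[S,T]] → 𝔽_p[[T]] obtained by reducing coefficients modulo p and substituting S ↦ f̄(T), T ↦ T induces an isomorphism of rings ℤ_p[[S,T]]/I_α(f) ≅ 𝔽_p[[T]]/((1+f̄)^α(1+T) − 1). (Reduction step in the proof of the key lemma.) -/

import Mathlib

open PowerSeries

/-- The two-variable power series ring `ℤ_p[[S,T]]`, realized as `(ℤ_p[[T]])[[S]]`: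
the outer variable `PowerSeries.X` is `S`, the inner `ℤ_p[[T]] = PowerSeries ℤ_[p]` is the
subring of series not involving `S` (included via `PowerSeries.C`), and `T` is
`C (PowerSeries.X)`. -/
abbrev Lambda (p : ℕ) [Fact p.Prime] : Type := PowerSeries (PowerSeries ℤ_[p])

/-- `(1+S)^α := Σ_{i≥0} C(α,i) S^i ∈ ℤ_p[[S,T]]`, where `C(α,i) = Ring.choose α i ∈ ℤ_p` is the
`p`-adic binomial coefficient `α(α−1)⋯(α−i+1)/i!`. -/
noncomputable def onePlusSPow (p : ℕ) [Fact p.Prime] (α : ℤ_[p]) : Lambda p :=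
  PowerSeries.mk fun i => PowerSeries.C (R := ℤ_[p]) (Ring.choose α i)

/-- The variable `T` of `ℤ_p[[S,T]]`. -/
noncomputable def Tvar (p : ℕ) [Fact p.Prime] : Lambda p :=
  PowerSeries.C (R := PowerSeries ℤ_[p]) PowerSeries.X

/-- The ideal `I_α(f) = ((1+S)^α(1+T) − 1, S − f(T), p)` of `ℤ_p[[S,T]]`. -/
noncomputable def Ialpha (p : ℕ) [Fact p.Prime] (f : PowerSeries ℤ_[p]) (α : ℤ_[p]) :
    Ideal (Lambda p) :=
  Ideal.span {onePlusSPow p α * (1 + Tvar p) - 1,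
    PowerSeries.X - PowerSeries.C (R := PowerSeries ℤ_[p]) f, (p : Lambda p)}

lemma p_mem_Ialpha (p : ℕ) [Fact p.Prime] (f : PowerSeries ℤ_[p]) (α : ℤ_[p]) :
    (p : Lambda p) ∈ Ialpha p f α :=
  Ideal.subset_span (by simp)

/-- The dimension of `R/I` as an `𝔽_p = ZMod p` vector space, for an ideal `I` of `R`
containing `p` (so that the quotient ring is naturally an `𝔽_p`-vector space). -/
noncomputable def fpDim (p : ℕ) {R : Type} [CommRing R] (I : Ideal R)
    (h : (p : R) ∈ I) : Cardinal :=
  letI : Module (ZMod p) (R ⧸ I) := AddCommGroup.zmodModule (fun x => by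
    obtain ⟨y, rfl⟩ := Ideal.Quotient.mk_surjective x
    rw [← map_nsmul, nsmul_eq_mul]
    exact Ideal.Quotient.eq_zero_iff_mem.mpr (I.mul_mem_right y h))
  Module.rank (ZMod p) (R ⧸ I)

/-- For `g ∈ 𝔽_p[[T]]` (intended to have zero constant coefficient),
`(1+g)^α := Σ_{i≥0} c(α,i)·g^i ∈ 𝔽_p[[T]]`, where `c(α,i) ∈ 𝔽_p` is the mod-`p` reduction of the
`p`-adic binomial coefficient `C(α,i) = Ring.choose α i ∈ ℤ_p`.  Since `g^i` has order `≥ i`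
when `g` has zero constant coefficient, the `n`-th coefficient of the sum is the finite sum
over `i ≤ n`. -/
noncomputable def onePlusPow (p : ℕ) [Fact p.Prime] (g : PowerSeries (ZMod p)) (α : ℤ_[p]) :
    PowerSeries (ZMod p) :=
  PowerSeries.mk fun n => ∑ i ∈ Finset.range (n + 1),
    PadicInt.toZMod (Ring.choose α i) * PowerSeries.coeff (R := ZMod p) n (g ^ i)


namespace QIso
variable {k : Type} [CommRing k]

/-- Truncated substitution sum. -/
noncomputable def tr (g : PowerSeries k) (N : ℕ) (F : PowerSeries (PowerSeries k)) :
    PowerSeries k :=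
  ∑ i ∈ Finset.range N, PowerSeries.coeff i F * g ^ i

lemma coeff_g_pow {g : PowerSeries k} (hg : constantCoeff (R := k) g = 0) {n i : ℕ} (h : n < i) :
    PowerSeries.coeff (R := k) n (g ^ i) = 0 := by
  have : (X : PowerSeries k) ^ i ∣ g ^ i := pow_dvd_pow_of_dvd (X_dvd_iff.mpr hg) i
  exact X_pow_dvd_iff.mp this n h

lemma coeff_mul_g_pow {g : PowerSeries k} (hg : constantCoeff (R := k) g = 0) (A : PowerSeries k)
    {n i : ℕ} (h : n < i) : PowerSeries.coeff (R := k) n (A * g ^ i) = 0 := by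
  rw [coeff_mul]
  refine Finset.sum_eq_zero fun p hp => ?_
  rw [Finset.HasAntidiagonal.mem_antidiagonal] at hp
  have : p.2 < i := lt_of_le_of_lt (hp ▸ Nat.le_add_left _ _) h
  rw [coeff_g_pow hg this, mul_zero]

lemma coeff_tr_stable {g : PowerSeries k} (hg : constantCoeff (R := k) g = 0)
    (F : PowerSeries (PowerSeries k)) {n N M : ℕ} (hn : n < N) (hNM : N ≤ M) :
    PowerSeries.coeff (R := k) n (tr g M F) = PowerSeries.coeff (R := k) n (tr g N F) := by
  unfold tr
  rw [Finset.range_eq_Ico, ← Finset.sum_Ico_consecutive _ (Nat.zero_le N) hNM, map_add,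
    ← Finset.range_eq_Ico]
  have : PowerSeries.coeff (R := k) n (∑ i ∈ Finset.Ico N M,
      PowerSeries.coeff i F * g ^ i) = 0 := by
    rw [map_sum]
    refine Finset.sum_eq_zero fun i hi => ?_
    exact coeff_mul_g_pow hg _ (lt_of_lt_of_le hn (Finset.mem_Ico.mp hi).1)
  rw [this, add_zero]

lemma tr_eq_eval_trunc (g : PowerSeries k) (N : ℕ) (F : PowerSeries (PowerSeries k)) :
    tr g (N + 1) F = Polynomial.eval g (trunc (N + 1) F) := by
  rw [Polynomial.eval_eq_sum_range' (natDegree_trunc_lt F N) g]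
  refine Finset.sum_congr rfl fun i hi => ?_
  rw [coeff_trunc, if_pos (Finset.mem_range.mp hi)]

lemma coeff_eval_of_dvd {g : PowerSeries k} (hg : constantCoeff (R := k) g = 0)
    {Q : Polynomial (PowerSeries k)} {N : ℕ} (hdvd : Polynomial.X ^ N ∣ Q) {n : ℕ}
    (hn : n < N) : PowerSeries.coeff (R := k) n (Polynomial.eval g Q) = 0 := by
  obtain ⟨R, rfl⟩ := hdvd
  rw [Polynomial.eval_mul, Polynomial.eval_pow, Polynomial.eval_X, mul_comm]
  exact coeff_mul_g_pow hg _ hn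

lemma coeff_tr_mul {g : PowerSeries k} (hg : constantCoeff (R := k) g = 0)
    (F G : PowerSeries (PowerSeries k)) {n N : ℕ} (hn : n < N + 1) :
    PowerSeries.coeff (R := k) n (tr g (N + 1) (F * G)) =
      PowerSeries.coeff (R := k) n (tr g (N + 1) F * tr g (N + 1) G) := by
  rw [tr_eq_eval_trunc, tr_eq_eval_trunc, tr_eq_eval_trunc, ← Polynomial.eval_mul]
  have hdvd : (Polynomial.X : Polynomial (PowerSeries k)) ^ (N + 1) ∣
      (trunc (N + 1) F * trunc (N + 1) G - trunc (N + 1) (F * G)) := by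
    rw [Polynomial.X_pow_dvd_iff]
    intro d hd
    rw [Polynomial.coeff_sub, Polynomial.coeff_mul, coeff_trunc, if_pos hd,
      PowerSeries.coeff_mul, sub_eq_zero]
    refine (Finset.sum_congr rfl fun p hp => ?_).symm
    rw [Finset.HasAntidiagonal.mem_antidiagonal] at hp
    rw [coeff_trunc, coeff_trunc, if_pos, if_pos]
    · exact lt_of_le_of_lt (hp ▸ Nat.le_add_left _ _) hd
    · exact lt_of_le_of_lt (hp ▸ Nat.le_add_right _ _) hd
  have := coeff_eval_of_dvd hg hdvd hn
  rw [Polynomial.eval_sub, map_sub, sub_eq_zero] at this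
  exact this.symm

/-- Evaluation of a two-variable series at `S = g`, as a function. -/
noncomputable def ev (g : PowerSeries k) (F : PowerSeries (PowerSeries k)) : PowerSeries k :=
  PowerSeries.mk fun n => PowerSeries.coeff (R := k) n (tr g (n + 1) F)

lemma coeff_ev {g : PowerSeries k} (hg : constantCoeff (R := k) g = 0)
    (F : PowerSeries (PowerSeries k)) {n N : ℕ} (hn : n < N) :
    PowerSeries.coeff (R := k) n (ev g F) = PowerSeries.coeff (R := k) n (tr g N F) := by
  rw [ev, coeff_mk]
  exact (coeff_tr_stable hg F (Nat.lt_succ_self n) hn).symm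

/-- Evaluation at `S = g` as a ring homomorphism, for `g` with zero constant term. -/
noncomputable def evHom (g : PowerSeries k) (hg : constantCoeff (R := k) g = 0) :
    PowerSeries (PowerSeries k) →+* PowerSeries k where
  toFun := ev g
  map_one' := by
    ext n
    rw [coeff_ev hg _ (Nat.lt_succ_self n)]
    unfold tr
    rw [Finset.sum_eq_single 0]
    · simp
    · intro i _ hi
      simp [coeff_one, if_neg hi]
    · simp
  map_mul' F G := by
    ext n
    rw [coeff_ev hg _ (Nat.lt_succ_self n), coeff_tr_mul hg F G (Nat.lt_succ_self n),
      PowerSeries.coeff_mul, PowerSeries.coeff_mul]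
    refine Finset.sum_congr rfl fun p hp => ?_
    rw [Finset.HasAntidiagonal.mem_antidiagonal] at hp
    rw [coeff_ev hg F (show p.1 < n + 1 by omega), coeff_ev hg G (show p.2 < n + 1 by omega)]
  map_zero' := by
    ext n
    rw [coeff_ev hg _ (Nat.lt_succ_self n)]
    unfold tr
    simp
  map_add' F G := by
    ext n
    rw [map_add, coeff_ev hg _ (Nat.lt_succ_self n), coeff_ev hg F (Nat.lt_succ_self n),
      coeff_ev hg G (Nat.lt_succ_self n)]
    unfold tr
    simp [Finset.sum_add_distrib, add_mul]

lemma evHom_C {g : PowerSeries k} (hg : constantCoeff (R := k) g = 0) (a : PowerSeries k) :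
    evHom g hg (PowerSeries.C a) = a := by
  ext n
  show PowerSeries.coeff (R := k) n (ev g _) = _
  rw [coeff_ev hg _ (Nat.lt_succ_self n)]
  unfold tr
  rw [Finset.sum_eq_single 0]
  · simp
  · intro i _ hi
    simp [coeff_C, if_neg hi]
  · simp

lemma evHom_X {g : PowerSeries k} (hg : constantCoeff (R := k) g = 0) :
    evHom g hg PowerSeries.X = g := by
  ext n
  show PowerSeries.coeff (R := k) n (ev g _) = _
  rw [coeff_ev hg _ (show n < n + 2 by omega)]
  unfold tr
  rw [Finset.sum_eq_single 1]
  · simp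
  · intro i _ hi
    simp [coeff_X, if_neg hi]
  · simp


/-- Shift of a power series: drop the first `j` coefficients. -/
noncomputable def shift (j : ℕ) (F : PowerSeries (PowerSeries k)) :
    PowerSeries (PowerSeries k) :=
  PowerSeries.mk fun i => PowerSeries.coeff (j + i) F

lemma coeff_mul_left_congr {x A B : PowerSeries k} {n : ℕ}
    (h : ∀ v ≤ n, PowerSeries.coeff (R := k) v A = PowerSeries.coeff (R := k) v B) :
    PowerSeries.coeff (R := k) n (x * A) = PowerSeries.coeff (R := k) n (x * B) := by
  rw [PowerSeries.coeff_mul, PowerSeries.coeff_mul]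
  refine Finset.sum_congr rfl fun p hp => ?_
  rw [Finset.HasAntidiagonal.mem_antidiagonal] at hp
  rw [h p.2 (by omega)]

lemma ev_shift {g : PowerSeries k} (hg : constantCoeff (R := k) g = 0)
    (F : PowerSeries (PowerSeries k)) (j : ℕ) :
    ev g (shift j F) = PowerSeries.coeff j F + g * ev g (shift (j + 1) F) := by
  ext n
  rw [coeff_ev hg _ (show n < n + 2 by omega), map_add]
  have htr : tr g (n + 2) (shift j F) =
      PowerSeries.coeff j F + g * tr g (n + 1) (shift (j + 1) F) := by
    unfold tr
    rw [Finset.sum_range_succ' (fun i => PowerSeries.coeff i (shift j F) * g ^ i) (n + 1)]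
    simp only [Finset.mul_sum, shift, coeff_mk, pow_zero, mul_one, add_zero, pow_succ]
    rw [add_comm]
    congr 1
    refine Finset.sum_congr rfl fun i _ => ?_
    rw [show j + (i + 1) = j + 1 + i by omega]
    ring
  rw [htr, map_add]
  congr 1
  exact coeff_mul_left_congr fun v hv => (coeff_ev hg _ (by omega)).symm

lemma ev_division {g : PowerSeries k} (hg : constantCoeff (R := k) g = 0)
    (F : PowerSeries (PowerSeries k)) :
    F = (PowerSeries.X - PowerSeries.C g) *
        (PowerSeries.mk fun j => ev g (shift (j + 1) F)) +
      PowerSeries.C (ev g F) := by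
  have h0 : ev g (shift 0 F) = ev g F := by
    have : shift 0 F = F := by
      ext i
      rw [shift, coeff_mk, zero_add]
    rw [this]
  ext j
  cases j with
  | zero =>
    rw [map_add, sub_mul, map_sub, coeff_zero_X_mul, PowerSeries.coeff_zero_C,
      PowerSeries.coeff_C_mul, coeff_mk]
    have := ev_shift hg F 0
    rw [h0] at this
    rw [this]
    ring
  | succ j =>
    rw [map_add, sub_mul, map_sub, coeff_succ_X_mul, PowerSeries.coeff_C_mul,
      coeff_mk, coeff_mk, PowerSeries.coeff_C, if_neg (Nat.succ_ne_zero j), add_zero,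
      ev_shift hg F (j + 1)]
    ring


section Padic
variable (p : ℕ) [Fact p.Prime]

/-- Coefficientwise set-theoretic lift `𝔽_p[[T]] → ℤ_p[[T]]` via `ZMod.val`. -/
noncomputable def lift1 (h : PowerSeries (ZMod p)) : PowerSeries ℤ_[p] :=
  PowerSeries.mk fun j => ((PowerSeries.coeff j h).val : ℤ_[p])

lemma map_red_lift1 (h : PowerSeries (ZMod p)) :
    PowerSeries.map (PadicInt.toZMod) (lift1 p h) = h := by
  haveI : NeZero p := ⟨(Fact.out : p.Prime).ne_zero⟩
  ext j
  rw [coeff_map, lift1, coeff_mk, map_natCast]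
  exact ZMod.natCast_rightInverse _

lemma red_eq_zero_iff (x : ℤ_[p]) :
    PadicInt.toZMod x = 0 ↔ x ∈ Ideal.span {(p : ℤ_[p])} := by
  rw [← PadicInt.maximalIdeal_eq_span_p, ← PadicInt.ker_toZMod, RingHom.mem_ker]

lemma mem_span_p_of_red_zero {A : Lambda p}
    (hA : PowerSeries.map (PowerSeries.map (PadicInt.toZMod (p := p))) A = 0) :
    A ∈ Ideal.span {(p : Lambda p)} := by
  have hdvd : ∀ i j : ℕ, (p : ℤ_[p]) ∣
      PowerSeries.coeff j (PowerSeries.coeff i A) := by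
    intro i j
    rw [← Ideal.mem_span_singleton, ← red_eq_zero_iff]
    have h1 : PowerSeries.coeff i (PowerSeries.map
        (PowerSeries.map (PadicInt.toZMod (p := p))) A) = 0 := by rw [hA, map_zero]
    rw [coeff_map] at h1
    have := congrArg (PowerSeries.coeff j) h1
    rw [coeff_map, map_zero] at this
    exact this
  set B : Lambda p := PowerSeries.mk fun i => PowerSeries.mk fun j =>
    Classical.choose (hdvd i j) with hB
  have hAB : A = (p : Lambda p) * B := by
    have hp1 : (p : Lambda p) = PowerSeries.C (PowerSeries.C (R := ℤ_[p]) (p : ℤ_[p])) := by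
      rw [map_natCast, map_natCast]
    rw [show (p : Lambda p) * B = p • B from (nsmul_eq_mul p B).symm]
    ext i j
    rw [map_nsmul, map_nsmul, nsmul_eq_mul, hB, coeff_mk, coeff_mk]
    exact Classical.choose_spec (hdvd i j)
  exact Ideal.mem_span_singleton.mpr ⟨B, hAB⟩

variable (f : PowerSeries ℤ_[p]) (hf : PowerSeries.constantCoeff (R := ℤ_[p]) f ∈ Ideal.span {(p : ℤ_[p])})
include hf

lemma hg_aux : PowerSeries.constantCoeff (R := (ZMod p)) (PowerSeries.map PadicInt.toZMod f) = 0 := by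
  have : PowerSeries.constantCoeff (R := (ZMod p)) (PowerSeries.map PadicInt.toZMod f)
      = PadicInt.toZMod (PowerSeries.constantCoeff (R := ℤ_[p]) f) := by
    rw [← coeff_zero_eq_constantCoeff, coeff_map, coeff_zero_eq_constantCoeff]
  rw [this, red_eq_zero_iff]
  exact hf

/-- The reduction-substitution homomorphism. -/
noncomputable def phi : Lambda p →+* PowerSeries (ZMod p) :=
  (evHom (PowerSeries.map PadicInt.toZMod f) (hg_aux p f hf)).comp
    (PowerSeries.map (PowerSeries.map PadicInt.toZMod))

lemma phi_formula (F : Lambda p) :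
    phi p f hf F = PowerSeries.mk fun n => ∑ i ∈ Finset.range (n + 1),
      PowerSeries.coeff (R := (ZMod p)) n
        (PowerSeries.map PadicInt.toZMod (PowerSeries.coeff (R := (PowerSeries ℤ_[p])) i F) *
          PowerSeries.map PadicInt.toZMod f ^ i) := by
  ext n
  show PowerSeries.coeff n (ev _ _) = _
  rw [ev, coeff_mk, coeff_mk, tr, map_sum]
  exact Finset.sum_congr rfl fun i _ => by rw [coeff_map]

lemma phi_apply (F : Lambda p) : phi p f hf F =
    evHom (PowerSeries.map PadicInt.toZMod f) (hg_aux p f hf)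
      (PowerSeries.map (PowerSeries.map PadicInt.toZMod) F) := rfl

lemma phi_C (h : PowerSeries ℤ_[p]) :
    phi p f hf (PowerSeries.C h) = PowerSeries.map PadicInt.toZMod h := by
  rw [phi_apply, map_C, evHom_C]

lemma phi_surjective : Function.Surjective (phi p f hf) := fun h =>
  ⟨PowerSeries.C (lift1 p h), by rw [phi_C, map_red_lift1]⟩

lemma phi_X : phi p f hf PowerSeries.X = PowerSeries.map PadicInt.toZMod f := by
  rw [phi_apply, map_X, evHom_X]

lemma phi_Tvar : phi p f hf (Tvar p) = PowerSeries.X := by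
  rw [Tvar, phi_C, map_X]

lemma phi_p : phi p f hf (p : Lambda p) = 0 := by
  rw [map_natCast, show ((p : ℕ) : PowerSeries (ZMod p)) = PowerSeries.C ((p : ℕ) : ZMod p)
    from (map_natCast (PowerSeries.C (R := (ZMod p))) p).symm, ZMod.natCast_self, map_zero]

lemma phi_onePlusSPow (α : ℤ_[p]) :
    phi p f hf (onePlusSPow p α) = onePlusPow p (PowerSeries.map PadicInt.toZMod f) α := by
  rw [phi_formula, onePlusPow]
  ext n
  rw [coeff_mk, coeff_mk]
  refine Finset.sum_congr rfl fun i _ => ?_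
  rw [onePlusSPow, coeff_mk, map_C, PowerSeries.coeff_C_mul]

lemma ker_phi_le (F : Lambda p) (α : ℤ_[p]) (hF : phi p f hf F = 0) : F ∈ Ialpha p f α := by
  set red := (PadicInt.toZMod : ℤ_[p] →+* ZMod p)
  set g := PowerSeries.map red f with hgdef
  have hg := hg_aux p f hf
  set G := PowerSeries.map (PowerSeries.map red) F with hG
  have hev : ev g G = 0 := hF
  have hdiv := ev_division hg G
  rw [hev, map_zero, add_zero] at hdiv
  set Qbar : PowerSeries (PowerSeries (ZMod p)) :=
    PowerSeries.mk fun j => ev g (shift (j + 1) G) with hQbar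
  set Q : Lambda p := PowerSeries.mk fun i => lift1 p (PowerSeries.coeff i Qbar) with hQ
  have hQred : PowerSeries.map (PowerSeries.map red) Q = Qbar := by
    ext i
    rw [coeff_map, hQ, coeff_mk, map_red_lift1]
  set A : Lambda p := F - (PowerSeries.X - PowerSeries.C f) * Q with hA
  have hAred : PowerSeries.map (PowerSeries.map red) A = 0 := by
    rw [hA, map_sub, map_mul, map_sub, map_X, map_C, hQred, ← hG, ← hgdef, ← hdiv, sub_self]
  have hAmem : A ∈ Ideal.span {(p : Lambda p)} := mem_span_p_of_red_zero p hAred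
  have h1 : (PowerSeries.X - PowerSeries.C f) * Q ∈ Ialpha p f α :=
    Ideal.mul_mem_right _ _ (Ideal.subset_span (by simp))
  have h2 : A ∈ Ialpha p f α :=
    (Ideal.span_singleton_le_iff_mem _).mpr (p_mem_Ialpha p f α) hAmem
  have : F = (PowerSeries.X - PowerSeries.C f) * Q + A := by rw [hA]; ring
  rw [this]
  exact Ideal.add_mem _ h1 h2

end Padic

end QIso

/-- reduction step in the key lemma: if the constant coefficient of
`f ∈ ℤ_p[[T]]` lies in `pℤ_p`, then the ring homomorphism `ℤ_p[[S,T]] → 𝔽_p[[T]]`, obtained by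
reducing coefficients mod `p` and substituting `S ↦ f̄(T)`, `T ↦ T` (here `f̄ ∈ 𝔽_p[[T]]` is the
coefficientwise reduction of `f` mod `p`, and an element `F = Σ_i a_i(T)·S^i` of
`ℤ_p[[S,T]] = (ℤ_p[[T]])[[S]]` is sent to `Σ_i ā_i(T)·f̄(T)^i`, whose `n`-th coefficient is the
finite sum over `i ≤ n` since `f̄` has zero constant coefficient), induces a ring isomorphism
`ℤ_p[[S,T]]/I_α(f) ≅ 𝔽_p[[T]]/((1+f̄)^α(1+T) − 1)`. -/
theorem quotient_Ialpha_iso (p : ℕ) [Fact p.Prime] (f : PowerSeries ℤ_[p])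
    (hf : PowerSeries.constantCoeff (R := ℤ_[p]) f ∈ Ideal.span {(p : ℤ_[p])}) (α : ℤ_[p]) :
    ∃ φ : Lambda p →+* PowerSeries (ZMod p),
      (∀ F : Lambda p, φ F = PowerSeries.mk fun n => ∑ i ∈ Finset.range (n + 1),
        PowerSeries.coeff (R := (ZMod p)) n
          (PowerSeries.map PadicInt.toZMod (PowerSeries.coeff (R := (PowerSeries ℤ_[p])) i F) *
            PowerSeries.map PadicInt.toZMod f ^ i)) ∧
      ∃ e : (Lambda p ⧸ Ialpha p f α) ≃+*
          (PowerSeries (ZMod p) ⧸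
            Ideal.span {onePlusPow p (PowerSeries.map PadicInt.toZMod f) α *
              (1 + PowerSeries.X) - 1}),
        ∀ F : Lambda p,
          e (Ideal.Quotient.mk (Ialpha p f α) F) = Ideal.Quotient.mk _ (φ F) := by
  classical
  set red := (PadicInt.toZMod : ℤ_[p] →+* ZMod p)
  set g := PowerSeries.map (PadicInt.toZMod (p := p)) f with hgdef
  set G0 : PowerSeries (ZMod p) := onePlusPow p g α * (1 + PowerSeries.X) - 1 with hG0
  set J : Ideal (PowerSeries (ZMod p)) := Ideal.span {G0} with hJ
  set φ := QIso.phi p f hf with hφ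
  refine ⟨φ, fun F => QIso.phi_formula p f hf F, ?_⟩
  set ψ : Lambda p →+* PowerSeries (ZMod p) ⧸ J := (Ideal.Quotient.mk J).comp φ with hψ
  have hW : φ (onePlusSPow p α * (1 + Tvar p) - 1) = G0 := by
    rw [map_sub, map_mul, map_add, map_one, QIso.phi_onePlusSPow, QIso.phi_Tvar]
  have hker : RingHom.ker ψ = Ialpha p f α := by
    apply le_antisymm
    · intro F hF
      rw [RingHom.mem_ker, hψ, RingHom.comp_apply, Ideal.Quotient.eq_zero_iff_mem, hJ,
        Ideal.mem_span_singleton] at hF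
      obtain ⟨h, hh⟩ := hF
      set H : Lambda p := PowerSeries.C (QIso.lift1 p h) with hH
      have hφH : φ H = h := by rw [hφ, hH, QIso.phi_C, QIso.map_red_lift1]
      have hker0 : φ (F - (onePlusSPow p α * (1 + Tvar p) - 1) * H) = 0 := by
        rw [map_sub, map_mul, hW, hφH, hh, sub_self]
      have h1 : F - (onePlusSPow p α * (1 + Tvar p) - 1) * H ∈ Ialpha p f α :=
        QIso.ker_phi_le p f hf _ α hker0
      have h2 : (onePlusSPow p α * (1 + Tvar p) - 1) * H ∈ Ialpha p f α :=
        Ideal.mul_mem_right _ _ (Ideal.subset_span (by simp))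
      have : F = (F - (onePlusSPow p α * (1 + Tvar p) - 1) * H) +
          (onePlusSPow p α * (1 + Tvar p) - 1) * H := by ring
      rw [this]
      exact Ideal.add_mem _ h1 h2
    · rw [Ialpha, Ideal.span_le]
      rintro x (rfl | rfl | rfl)
      · rw [SetLike.mem_coe, RingHom.mem_ker, hψ, RingHom.comp_apply, hW,
          Ideal.Quotient.eq_zero_iff_mem]
        exact Ideal.subset_span rfl
      · rw [SetLike.mem_coe, RingHom.mem_ker, hψ, RingHom.comp_apply, map_sub,
          QIso.phi_X, QIso.phi_C]
        rw [sub_self, map_zero]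
      · rw [SetLike.mem_coe, RingHom.mem_ker, hψ, RingHom.comp_apply, QIso.phi_p, map_zero]
  have hsurj : Function.Surjective ψ :=
    (Ideal.Quotient.mk_surjective).comp (QIso.phi_surjective p f hf)
  refine ⟨(Ideal.quotEquivOfEq hker.symm).trans (RingHom.quotientKerEquivOfSurjective hsurj),
    fun F => ?_⟩
  rw [RingEquiv.trans_apply, Ideal.quotEquivOfEq_mk]
  exact RingHom.kerLift_mk ψ F
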